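/- Let A be a weakly irreducible nonnegative tensor of order m and dimension n, and suppose a positive vector x ∈ ℝ^n_{++} and λ > 0 satisfy A x^{m-1} ≤ λ x^{[m-1]} componentwise with strict inequality in at least one coordinate. Then there exists a positive vector y with A y^{m-1} < λ y^{[m-1]} strictly in every coordinate, and consequently ρ(A) < λ. -/

import Mathlib

open Finset

noncomputable section

/-- `(A x^{m-1})_i` for a tensor of order `m'+1` and dimension `n`. -/
def tApply {n m' : ℕ} (A : Fin n → (Fin m' → Fin n) → ℝ) (x : Fin n → ℝ) (i : Fin n) : ℝ :=
  ∑ idx : Fin m' → Fin n, A i idx * ∏ k, x (idx k)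

/-- Complex version of `tApply`. -/
def tApplyC {n m' : ℕ} (A : Fin n → (Fin m' → Fin n) → ℝ) (x : Fin n → ℂ) (i : Fin n) : ℂ :=
  ∑ idx : Fin m' → Fin n, (A i idx : ℂ) * ∏ k, x (idx k)

/-- `lam` is an eigenvalue of the tensor `A`. -/
def IsEig {n m' : ℕ} (A : Fin n → (Fin m' → Fin n) → ℝ) (lam : ℂ) : Prop :=
  ∃ x : Fin n → ℂ, x ≠ 0 ∧ ∀ i, tApplyC A x i = lam * x i ^ m'

/-- The spectral radius of a tensor. -/
def specRad {n m' : ℕ} (A : Fin n → (Fin m' → Fin n) → ℝ) : ℝ :=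
  sSup {r | ∃ lam, IsEig A lam ∧ r = ‖lam‖}

/-- The majorization matrix `M_A` of a tensor `A`. -/
def major {n m' : ℕ} (A : Fin n → (Fin m' → Fin n) → ℝ) (i j : Fin n) : ℝ :=
  ∑ idx ∈ univ.filter (fun idx : Fin m' → Fin n => ∃ k, idx k = j), A i idx

/-- The majorization matrix of the principal sub-tensor `A_I`. -/
def subMajor {n m' : ℕ} (A : Fin n → (Fin m' → Fin n) → ℝ) (I : Finset (Fin n))
    (i j : Fin n) : ℝ :=
  ∑ idx ∈ univ.filter (fun idx : Fin m' → Fin n => (∃ k, idx k = j) ∧ ∀ k, idx k ∈ I),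
    A i idx

/-- Irreducibility of (the principal submatrix on `I` of) a nonnegative matrix. -/
def MatIrredOn {n : ℕ} (M : Fin n → Fin n → ℝ) (I : Finset (Fin n)) : Prop :=
  ∀ S ⊆ I, S.Nonempty → S ≠ I → ∃ i ∈ S, ∃ j ∈ I \ S, M i j ≠ 0

/-- A tensor is weakly irreducible if its majorization matrix is irreducible. -/
def WeaklyIrred {n m' : ℕ} (A : Fin n → (Fin m' → Fin n) → ℝ) : Prop :=
  MatIrredOn (major A) Finset.univ

/-- Weak irreducibility of the principal sub-tensor `A_I`. -/
def WeaklyIrredOn {n m' : ℕ} (A : Fin n → (Fin m' → Fin n) → ℝ) (I : Finset (Fin n)) : Prop :=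
  MatIrredOn (subMajor A I) I

/-- `(A_I e_I^{m-1})_i`, the action of the principal sub-tensor on the all-ones vector. -/
def subApplyOnes {n m' : ℕ} (A : Fin n → (Fin m' → Fin n) → ℝ) (I : Finset (Fin n))
    (i : Fin n) : ℝ :=
  ∑ idx ∈ univ.filter (fun idx : Fin m' → Fin n => ∀ k, idx k ∈ I), A i idx

/-- The spectral radius of the principal sub-tensor `A_I`. -/
def subSpecRad {n m' : ℕ} (A : Fin n → (Fin m' → Fin n) → ℝ) (I : Finset (Fin n)) : ℝ :=
  sSup {r | ∃ lam : ℂ, ∃ x : Fin n → ℂ, (∃ i ∈ I, x i ≠ 0) ∧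
    (∀ i ∈ I, (∑ idx ∈ univ.filter (fun idx : Fin m' → Fin n => ∀ k, idx k ∈ I),
      (A i idx : ℂ) * ∏ k, x (idx k)) = lam * x i ^ m') ∧ r = ‖lam‖}

lemma tApply_nonneg' {n m' : ℕ} (A : Fin n → (Fin m' → Fin n) → ℝ)
    (hA : ∀ i idx, 0 ≤ A i idx) (x : Fin n → ℝ) (hx : ∀ i, 0 ≤ x i) (i : Fin n) :
    0 ≤ tApply A x i :=
  Finset.sum_nonneg fun idx _ => mul_nonneg (hA i idx) (Finset.prod_nonneg fun k _ => hx _)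

lemma tApply_mono' {n m' : ℕ} (A : Fin n → (Fin m' → Fin n) → ℝ)
    (hA : ∀ i idx, 0 ≤ A i idx) {x y : Fin n → ℝ} (hy : ∀ i, 0 ≤ y i)
    (hxy : ∀ i, y i ≤ x i) (i : Fin n) : tApply A y i ≤ tApply A x i :=
  Finset.sum_le_sum fun idx _ => mul_le_mul_of_nonneg_left
    (Finset.prod_le_prod (fun k _ => hy _) (fun k _ => hxy _)) (hA i idx)

lemma step' {n m' : ℕ} (hm : 1 ≤ m') (A : Fin n → (Fin m' → Fin n) → ℝ)
    (hA : ∀ i idx, 0 ≤ A i idx) (lam : ℝ) (hlam : 0 < lam)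
    (x : Fin n → ℝ) (hx : ∀ i, 0 < x i)
    (hle : ∀ i, tApply A x i ≤ lam * x i ^ m')
    (i j : Fin n) (hij : i ≠ j)
    (hjs : tApply A x j < lam * x j ^ m')
    (hmaj : major A i j ≠ 0) :
    ∃ y : Fin n → ℝ, (∀ k, 0 < y k) ∧
      (∀ k, tApply A y k ≤ lam * y k ^ m') ∧
      (∀ k, tApply A x k < lam * x k ^ m' → tApply A y k < lam * y k ^ m') ∧
      tApply A y i < lam * y i ^ m' := by
  have hm'one : (1:ℝ) ≤ m' := by exact_mod_cast hm
  have hm'pos : (0:ℝ) < m' := by linarith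
  set L := lam * x j ^ m' with hL
  have hLpos : 0 < L := mul_pos hlam (pow_pos (hx j) _)
  set c := tApply A x j with hc
  have hc0 : 0 ≤ c := tApply_nonneg' A hA x (fun k => (hx k).le) j
  have hcL : c < L := hjs
  set a : ℝ := -((L - c) / (2 * m' * L)) with ha
  set s : ℝ := 1 + a with hs
  have hden : (0:ℝ) < 2 * m' * L := by positivity
  have hfrac_pos : 0 < (L - c) / (2 * m' * L) := div_pos (by linarith) hden
  have hfrac_lt : (L - c) / (2 * m' * L) < 1 := by
    rw [div_lt_one hden]; nlinarith [mul_le_mul_of_nonneg_right hm'one hLpos.le]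
  have hs_pos : 0 < s := by rw [hs, ha]; linarith
  have hs_lt : s < 1 := by rw [hs, ha]; linarith
  have hbern : 1 + (m':ℝ) * a ≤ s ^ m' := one_add_mul_le_pow (by rw [ha]; linarith) m'
  have h1 : 1 + (m':ℝ) * a = (L + c) / (2 * L) := by
    rw [ha]; field_simp; ring
  have hkey : c < L * s ^ m' := by
    have hpow : (L + c) / (2 * L) ≤ s ^ m' := h1 ▸ hbern
    have h2 : L * ((L + c) / (2 * L)) ≤ L * s ^ m' :=
      mul_le_mul_of_nonneg_left hpow hLpos.le
    have h3 : L * ((L + c) / (2 * L)) = (L + c) / 2 := by field_simp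
    linarith
  set y : Fin n → ℝ := fun k => if k = j then s * x j else x k with hy
  have hypos : ∀ k, 0 < y k := by
    intro k; by_cases h : k = j
    · simp only [hy, h, if_pos rfl]; exact mul_pos hs_pos (hx j)
    · simpa only [hy, if_neg h] using hx k
  have hyle : ∀ k, y k ≤ x k := by
    intro k; by_cases h : k = j
    · simp only [hy, h, if_pos rfl]; nlinarith [hx j]
    · simp [hy, if_neg h]
  have hmono : ∀ k, tApply A y k ≤ tApply A x k :=
    fun k => tApply_mono' A hA (fun l => (hypos l).le) hyle k
  have hyj : y j = s * x j := by simp [hy]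
  have hyk : ∀ k, k ≠ j → y k = x k := fun k h => by simp [hy, if_neg h]
  have hstrict_j : tApply A y j < lam * y j ^ m' := by
    have h4 : lam * y j ^ m' = L * s ^ m' := by rw [hyj, mul_pow, hL]; ring
    calc tApply A y j ≤ c := hmono j
    _ < L * s ^ m' := hkey
    _ = lam * y j ^ m' := h4.symm
  have hstrict_i : tApply A y i < lam * y i ^ m' := by
    obtain ⟨idx0, hmem, hne⟩ := Finset.exists_ne_zero_of_sum_ne_zero hmaj
    obtain ⟨k0, hk0⟩ := (Finset.mem_filter.mp hmem).2
    have hApos : 0 < A i idx0 := (hA i idx0).lt_of_ne (Ne.symm hne)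
    have hprod : ∏ k, y (idx0 k) < ∏ k, x (idx0 k) :=
      Finset.prod_lt_prod (fun k _ => hypos _) (fun k _ => hyle _)
        ⟨k0, mem_univ _, by rw [hk0, hyj]; nlinarith [hx j]⟩
    have hlt_i : tApply A y i < tApply A x i :=
      Finset.sum_lt_sum
        (fun idx _ => mul_le_mul_of_nonneg_left
          (Finset.prod_le_prod (fun k _ => (hypos _).le) (fun k _ => hyle _)) (hA i idx))
        ⟨idx0, mem_univ _, mul_lt_mul_of_pos_left hprod hApos⟩
    calc tApply A y i < tApply A x i := hlt_i
    _ ≤ lam * x i ^ m' := hle i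
    _ = lam * y i ^ m' := by rw [hyk i hij]
  refine ⟨y, hypos, ?_, ?_, hstrict_i⟩
  · intro k; by_cases h : k = j
    · subst h; exact hstrict_j.le
    · calc tApply A y k ≤ tApply A x k := hmono k
      _ ≤ lam * x k ^ m' := hle k
      _ = lam * y k ^ m' := by rw [hyk k h]
  · intro k hk; by_cases h : k = j
    · subst h; exact hstrict_j
    · calc tApply A y k ≤ tApply A x k := hmono k
      _ < lam * x k ^ m' := hk
      _ = lam * y k ^ m' := by rw [hyk k h]

lemma grow' {n m' : ℕ} (hm : 1 ≤ m') (A : Fin n → (Fin m' → Fin n) → ℝ)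
    (hA : ∀ i idx, 0 ≤ A i idx) (hirr : WeaklyIrred A)
    (lam : ℝ) (hlam : 0 < lam) :
    ∀ K : ℕ, ∀ x : Fin n → ℝ, (∀ i, 0 < x i) →
      (∀ i, tApply A x i ≤ lam * x i ^ m') →
      (∃ i, tApply A x i < lam * x i ^ m') →
      n ≤ K + (univ.filter fun i => tApply A x i < lam * x i ^ m').card →
      ∃ y : Fin n → ℝ, (∀ i, 0 < y i) ∧ ∀ i, tApply A y i < lam * y i ^ m' := by
  intro K
  induction K with
  | zero =>
    intro x hx hle hstrict hcard
    refine ⟨x, hx, fun i => ?_⟩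
    have heq : (univ.filter fun i => tApply A x i < lam * x i ^ m') = univ :=
      Finset.eq_of_subset_of_card_le (Finset.subset_univ _) (by simpa using hcard)
    have : i ∈ (univ.filter fun i => tApply A x i < lam * x i ^ m') := by
      rw [heq]; exact mem_univ i
    exact (mem_filter.mp this).2
  | succ K ih =>
    intro x hx hle hstrict hcard
    set S := univ.filter fun i => tApply A x i < lam * x i ^ m' with hS
    by_cases hSu : S = univ
    · refine ⟨x, hx, fun i => ?_⟩
      have : i ∈ S := by rw [hSu]; exact mem_univ i
      exact (mem_filter.mp this).2
    · obtain ⟨i0, hi0⟩ := hstrict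
      have hi0S : i0 ∈ S := mem_filter.mpr ⟨mem_univ _, hi0⟩
      have hTne : (univ \ S).Nonempty := by
        rw [Finset.sdiff_nonempty]
        intro h
        exact hSu (Finset.univ_subset_iff.mp h)
      have hTnu : univ \ S ≠ univ := by
        intro h
        have : i0 ∈ univ \ S := by rw [h]; exact mem_univ i0
        exact (Finset.mem_sdiff.mp this).2 hi0S
      obtain ⟨i, hiT, j, hjS', hmaj⟩ := hirr (univ \ S) (Finset.subset_univ _) hTne hTnu
      have hiS : i ∉ S := (Finset.mem_sdiff.mp hiT).2
      have hjS : j ∈ S := by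
        have := Finset.mem_sdiff.mp hjS'
        rcases Finset.mem_sdiff.mp (show j ∈ univ \ (univ \ S) from hjS') with ⟨-, h2⟩
        by_contra hc
        exact h2 (Finset.mem_sdiff.mpr ⟨mem_univ _, hc⟩)
      have hij : i ≠ j := fun h => hiS (h ▸ hjS)
      have hjs : tApply A x j < lam * x j ^ m' := (mem_filter.mp hjS).2
      obtain ⟨y, hy, hyle, hpres, hyi⟩ := step' hm A hA lam hlam x hx hle i j hij hjs hmaj
      refine ih y hy hyle ⟨i, hyi⟩ ?_
      have hsub : insert i S ⊆ univ.filter (fun k => tApply A y k < lam * y k ^ m') := by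
        intro k hk
        rcases Finset.mem_insert.mp hk with rfl | hk
        · exact mem_filter.mpr ⟨mem_univ _, hyi⟩
        · exact mem_filter.mpr ⟨mem_univ _, hpres k (mem_filter.mp hk).2⟩
      have hcard' : S.card + 1 ≤ (univ.filter fun k => tApply A y k < lam * y k ^ m').card := by
        calc S.card + 1 = (insert i S).card := (Finset.card_insert_of_notMem hiS).symm
        _ ≤ _ := Finset.card_le_card hsub
      omega


/-- a positive sub-invariant vector with one strict inequality yields a strictly
sub-invariant positive vector, whence `ρ(A) < λ`. -/
theorem strict_subinvariance {n m' : ℕ} (hm : 1 ≤ m') (hn : 1 ≤ n)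
    (A : Fin n → (Fin m' → Fin n) → ℝ)
    (hA : ∀ i idx, 0 ≤ A i idx)
    (hirr : WeaklyIrred A)
    (lam : ℝ) (hlam : 0 < lam)
    (x : Fin n → ℝ) (hx : ∀ i, 0 < x i)
    (hle : ∀ i, tApply A x i ≤ lam * x i ^ m')
    (hstrict : ∃ i, tApply A x i < lam * x i ^ m') :
    (∃ y : Fin n → ℝ, (∀ i, 0 < y i) ∧ ∀ i, tApply A y i < lam * y i ^ m') ∧
      specRad A < lam := by
  obtain ⟨y, hy, hys⟩ := grow' hm A hA hirr lam hlam n x hx hle hstrict (Nat.le_add_right _ _)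
  refine ⟨⟨y, hy, hys⟩, ?_⟩
  haveI : Nonempty (Fin n) := ⟨⟨0, hn⟩⟩
  have hne : (univ : Finset (Fin n)).Nonempty := univ_nonempty
  set c := univ.sup' hne (fun i => tApply A y i / y i ^ m') with hcdef
  have hclt : c < lam := (Finset.sup'_lt_iff hne).mpr fun i _ =>
    (div_lt_iff₀ (pow_pos (hy i) _)).mpr (hys i)
  have hc0 : 0 ≤ c := by
    refine le_trans ?_ (Finset.le_sup' _ (mem_univ (⟨0, hn⟩ : Fin n)))
    exact div_nonneg (tApply_nonneg' A hA y (fun k => (hy k).le) _) (pow_pos (hy _) _).le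
  have hbound : specRad A ≤ c := by
    apply Real.sSup_le _ hc0
    rintro r ⟨lam0, ⟨z, hz0, hze⟩, rfl⟩
    obtain ⟨i0, -, hmax⟩ := Finset.exists_max_image univ (fun i => ‖z i‖ / y i) hne
    set t := ‖z i0‖ / y i0 with htdef
    have ht0 : 0 < t := by
      obtain ⟨k, hk⟩ := Function.ne_iff.mp hz0
      have hk' : 0 < ‖z k‖ / y k :=
        div_pos (by simpa using hk) (hy k)
      exact lt_of_lt_of_le hk' (hmax k (mem_univ k))
    have htle : ∀ k, ‖z k‖ ≤ t * y k := fun k =>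
      (div_le_iff₀ (hy k)).mp (hmax k (mem_univ k))
    have hzi0 : ‖z i0‖ = t * y i0 := by
      rw [htdef, div_mul_cancel₀]
      exact (hy i0).ne'
    have h1 : ‖tApplyC A z i0‖ = ‖lam0‖ * ‖z i0‖ ^ m' := by
      rw [hze i0, norm_mul, norm_pow]
    have h2 : ‖tApplyC A z i0‖ ≤
        ∑ idx : Fin m' → Fin n, A i0 idx * ∏ k, ‖z (idx k)‖ := by
      refine le_trans (norm_sum_le _ _) (le_of_eq (Finset.sum_congr rfl ?_))
      intro idx _
      rw [norm_mul, norm_prod, Complex.norm_real, Real.norm_of_nonneg (hA i0 idx)]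
    have h3 : ∑ idx : Fin m' → Fin n, A i0 idx * ∏ k, ‖z (idx k)‖ ≤
        t ^ m' * tApply A y i0 := by
      rw [tApply, Finset.mul_sum]
      refine Finset.sum_le_sum fun idx _ => ?_
      have : ∏ k, ‖z (idx k)‖ ≤ ∏ k, (t * y (idx k)) :=
        Finset.prod_le_prod (fun k _ => norm_nonneg _) (fun k _ => htle _)
      have hp : ∏ k : Fin m', (t * y (idx k)) = t ^ m' * ∏ k, y (idx k) := by
        rw [Finset.prod_mul_distrib, Finset.prod_const, Finset.card_univ, Fintype.card_fin]
      calc A i0 idx * ∏ k, ‖z (idx k)‖ ≤ A i0 idx * (t ^ m' * ∏ k, y (idx k)) := by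
            rw [← hp]; exact mul_le_mul_of_nonneg_left this (hA i0 idx)
      _ = t ^ m' * (A i0 idx * ∏ k, y (idx k)) := by ring
    have key : ‖lam0‖ * (t ^ m' * y i0 ^ m') ≤ t ^ m' * tApply A y i0 := by
      have := le_trans (le_of_eq h1.symm) (le_trans h2 h3)
      rwa [hzi0, mul_pow] at this
    have hyc : tApply A y i0 ≤ c * y i0 ^ m' := by
      have := Finset.le_sup' (fun i => tApply A y i / y i ^ m') (mem_univ i0)
      exact (div_le_iff₀ (pow_pos (hy i0) _)).mp this
    have htpow : 0 < t ^ m' := pow_pos ht0 _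
    have hypow : 0 < y i0 ^ m' := pow_pos (hy i0) _
    have h5 : ‖lam0‖ * (t ^ m' * y i0 ^ m') ≤ c * (t ^ m' * y i0 ^ m') := by
      calc ‖lam0‖ * (t ^ m' * y i0 ^ m') ≤ t ^ m' * tApply A y i0 := key
      _ ≤ t ^ m' * (c * y i0 ^ m') := mul_le_mul_of_nonneg_left hyc htpow.le
      _ = c * (t ^ m' * y i0 ^ m') := by ring
    exact (mul_le_mul_iff_of_pos_right (mul_pos htpow hypow)).mp h5
  linarith
end
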